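/- For every α < 0, every κ ∈ ℕ₀, and every choice of points b_j ∈ □j for j ∈ ℤ²\K_κ, the constant J(α,κ,b) = Σ_{j ∈ ℤ²\K_κ} ∫_{□j} (‖x‖^α − ‖b_j‖^α)² dx is finite. -/

import Mathlib

open MeasureTheory Filter Set Real

noncomputable section

abbrev E2 : Type := EuclideanSpace ℝ (Fin 2)

/-- The closed square of side length `r` centred at `c`. -/
def sqC (c : E2) (r : ℝ) : Set E2 :=
  {x : E2 | |x 0 - c 0| ≤ r / 2 ∧ |x 1 - c 1| ≤ r / 2}

/-- The point of `ℝ²` corresponding to `j ∈ ℤ²`. -/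
def jv (j : ℤ × ℤ) : E2 := WithLp.toLp 2 ![(j.1 : ℝ), (j.2 : ℝ)]

/-- `K_κ = {-κ,…,κ}² ⊆ ℤ²`. -/
def Kfin (κ : ℕ) : Finset (ℤ × ℤ) :=
  Finset.Icc (-(κ : ℤ)) (κ : ℤ) ×ˢ Finset.Icc (-(κ : ℤ)) (κ : ℤ)

lemma aux_mvt {α m s t : ℝ} (hα : α ≤ 1) (hm : 0 < m) (hs : m ≤ s) (ht : m ≤ t) :
    |s ^ α - t ^ α| ≤ |α| * m ^ (α - 1) * |s - t| := by
  have key : ∀ x ∈ Ici m, HasDerivWithinAt (fun u : ℝ => u ^ α)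
      (α * x ^ (α - 1)) (Ici m) x := fun x hx =>
    (Real.hasDerivAt_rpow_const (Or.inl (hm.trans_le hx).ne')).hasDerivWithinAt
  have bound : ∀ x ∈ Ici m, ‖α * x ^ (α - 1)‖ ≤ |α| * m ^ (α - 1) := by
    intro x hx
    rw [Real.norm_eq_abs, abs_mul, abs_of_nonneg (Real.rpow_nonneg (hm.le.trans hx) _)]
    exact mul_le_mul_of_nonneg_left
      (Real.rpow_le_rpow_of_nonpos hm hx (by linarith)) (abs_nonneg α)
  simpa [Real.norm_eq_abs] using
    (convex_Ici m).norm_image_sub_le_of_norm_hasDerivWithin_le key bound ht hs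

lemma coord_le_norm (x : E2) (i : Fin 2) : |x i| ≤ ‖x‖ := by
  rw [EuclideanSpace.norm_eq, ← Real.sqrt_sq_eq_abs]
  apply Real.sqrt_le_sqrt
  simpa using Finset.single_le_sum (f := fun j => ‖x j‖ ^ 2)
    (fun _ _ => sq_nonneg _) (Finset.mem_univ i)

lemma norm_le_two {x y : E2} (h0 : |x 0 - y 0| ≤ 1) (h1 : |x 1 - y 1| ≤ 1) :
    ‖x - y‖ ≤ 2 := by
  rw [EuclideanSpace.norm_eq]
  have : Real.sqrt 4 = 2 := by
    rw [show (4:ℝ) = 2^2 by norm_num, Real.sqrt_sq (by norm_num)]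
  rw [← this]
  apply Real.sqrt_le_sqrt
  have e0 : ‖(x - y) 0‖ = |x 0 - y 0| := by
    simp [Real.norm_eq_abs]
  have e1 : ‖(x - y) 1‖ = |x 1 - y 1| := by
    simp [Real.norm_eq_abs]
  rw [Fin.sum_univ_two, e0, e1]
  nlinarith [abs_nonneg (x 0 - y 0), abs_nonneg (x 1 - y 1)]

lemma volume_sqC (c : E2) : volume (sqC c 1) = 1 := by
  have hset : sqC c 1 = (MeasurableEquiv.toLp 2 (Fin 2 → ℝ)).symm ⁻¹'
      (Set.univ.pi fun i => Icc (c i - 1/2) (c i + 1/2)) := by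
    ext x
    simp only [sqC, mem_setOf_eq, mem_preimage, Set.mem_pi, mem_univ, forall_true_left,
      Fin.forall_fin_two, mem_Icc, MeasurableEquiv.toLp_symm_apply, MeasurableEquiv.coe_mk,
      Equiv.coe_fn_mk, abs_le, MeasurableEquiv.coe_toLp_symm]
    constructor
    · rintro ⟨⟨a,b⟩,⟨d,e⟩⟩; constructor <;> constructor <;> linarith
    · rintro ⟨⟨a,b⟩,⟨d,e⟩⟩; constructor <;> constructor <;> linarith
  rw [hset, (EuclideanSpace.volume_preserving_symm_measurableEquiv_toLp (Fin 2)).measure_preimage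
    (MeasurableSet.univ_pi fun i => measurableSet_Icc).nullMeasurableSet,
    volume_pi_pi]
  simp [Real.volume_Icc]
  norm_num

lemma one_le_nn {κ : ℕ} {j : ℤ × ℤ} (hj : j ∉ Kfin κ) :
    1 ≤ max |(j.1 : ℝ)| |(j.2 : ℝ)| := by
  have h : (κ : ℤ) < |j.1| ∨ (κ : ℤ) < |j.2| := by
    by_contra h; push_neg at h
    exact hj (Finset.mem_product.mpr ⟨Finset.mem_Icc.mpr (abs_le.mp h.1),
      Finset.mem_Icc.mpr (abs_le.mp h.2)⟩)
  have hκ : (0 : ℤ) ≤ (κ : ℤ) := Int.natCast_nonneg κ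
  have : (1 : ℤ) ≤ max |j.1| |j.2| := by
    rcases h with h | h
    · exact le_max_of_le_left (by linarith)
    · exact le_max_of_le_right (by linarith)
  exact_mod_cast this

lemma norm_lower (j : ℤ × ℤ) {x : E2} (hx : x ∈ sqC (jv j) 1) :
    max |(j.1 : ℝ)| |(j.2 : ℝ)| - 1/2 ≤ ‖x‖ := by
  obtain ⟨h0, h1⟩ := hx
  have e0 : jv j 0 = (j.1 : ℝ) := by simp [jv]
  have e1 : jv j 1 = (j.2 : ℝ) := by simp [jv]
  rw [e0] at h0; rw [e1] at h1
  have c0 := coord_le_norm x 0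
  have c1 := coord_le_norm x 1
  have d0 : |(j.1 : ℝ)| - |x 0| ≤ 1/2 := by
    have h := abs_sub_abs_le_abs_sub ((j.1 : ℝ)) (x 0)
    rw [abs_sub_comm] at h; linarith
  have d1 : |(j.2 : ℝ)| - |x 1| ≤ 1/2 := by
    have h := abs_sub_abs_le_abs_sub ((j.2 : ℝ)) (x 1)
    rw [abs_sub_comm] at h; linarith
  rcases max_cases |(j.1 : ℝ)| |(j.2 : ℝ)| with ⟨he, _⟩ | ⟨he, _⟩ <;> rw [he] <;> linarith

theorem stmt7 (α : ℝ) (hα : α < 0) (κ : ℕ) (b : ℤ × ℤ → E2)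
    (hb : ∀ j : ℤ × ℤ, j ∉ Kfin κ → b j ∈ sqC (jv j) 1) :
    (∑' j : {j : ℤ × ℤ // j ∉ Kfin κ},
        ∫⁻ x in sqC (jv j.1) 1, ENNReal.ofReal ((‖x‖ ^ α - ‖b j.1‖ ^ α) ^ 2)) < ⊤ := by
  set k : ℝ := 2 - 2*α with hkdef
  have hk : 2 < k := by rw [hkdef]; linarith
  set nn : ℤ × ℤ → ℝ := fun j => max |(j.1 : ℝ)| |(j.2 : ℝ)| with hnn
  set g : ℤ × ℤ → ℝ := fun j => (|α| * (nn j / 2) ^ (α - 1) * 2) ^ 2 with hg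
  have key : ∀ j : {j : ℤ × ℤ // j ∉ Kfin κ},
      (∫⁻ x in sqC (jv j.1) 1, ENNReal.ofReal ((‖x‖ ^ α - ‖b j.1‖ ^ α) ^ 2))
        ≤ ENNReal.ofReal (g j.1) := by
    rintro ⟨j, hj⟩
    have hn : 1 ≤ nn j := one_le_nn hj
    have hm : 0 < nn j / 2 := by linarith
    have hbmem := hb j hj
    have hbn : nn j / 2 ≤ ‖b j‖ := by have := norm_lower j hbmem; linarith
    calc (∫⁻ x in sqC (jv j) 1, ENNReal.ofReal ((‖x‖ ^ α - ‖b j‖ ^ α) ^ 2))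
        ≤ ∫⁻ _ in sqC (jv j) 1, ENNReal.ofReal (g j) := by
          apply setLIntegral_mono measurable_const
          intro x hx
          apply ENNReal.ofReal_le_ofReal
          have hxn : nn j / 2 ≤ ‖x‖ := by have := norm_lower j hx; linarith
          have hsub : ‖x - b j‖ ≤ 2 := by
            apply norm_le_two
            · have p1 := hx.1; have p2 := hbmem.1
              have h := abs_sub_le (x 0) (jv j 0) ((b j) 0)
              rw [abs_sub_comm (jv j 0)] at h; linarith
            · have p1 := hx.2; have p2 := hbmem.2
              have h := abs_sub_le (x 1) (jv j 1) ((b j) 1)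
              rw [abs_sub_comm (jv j 1)] at h; linarith
          have hdist : |‖x‖ - ‖b j‖| ≤ 2 := (abs_norm_sub_norm_le x (b j)).trans hsub
          have hmvt := aux_mvt (by linarith : α ≤ 1) hm hxn hbn
          have hle : |‖x‖ ^ α - ‖b j‖ ^ α| ≤ |α| * (nn j / 2) ^ (α - 1) * 2 := by
            refine hmvt.trans ?_
            have hc : 0 ≤ |α| * (nn j / 2) ^ (α - 1) := by positivity
            exact mul_le_mul_of_nonneg_left hdist hc
          calc (‖x‖ ^ α - ‖b j‖ ^ α) ^ 2 = |‖x‖ ^ α - ‖b j‖ ^ α| ^ 2 := (sq_abs _).symm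
            _ ≤ (|α| * (nn j / 2) ^ (α - 1) * 2) ^ 2 :=
                pow_le_pow_left₀ (abs_nonneg _) hle 2
      _ = ENNReal.ofReal (g j) := by
          rw [setLIntegral_const, volume_sqC, mul_one]
  have hsum : Summable fun j : {j : ℤ × ℤ // j ∉ Kfin κ} => g j.1 := by
    have h1 := EisensteinSeries.summable_one_div_norm_rpow hk
    have h2 : Summable fun p : ℤ × ℤ => ‖(finTwoArrowEquiv ℤ).symm p‖ ^ (-k) :=
      ((finTwoArrowEquiv ℤ).symm.summable_iff).mpr h1
    have h3 := ((h2.mul_left (4 * α ^ 2 * ((1:ℝ)/2) ^ (2*α - 2))).subtype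
      {j : ℤ × ℤ | j ∉ Kfin κ})
    apply Summable.of_nonneg_of_le (fun j => sq_nonneg _) ?_ h3
    rintro ⟨j, hj⟩
    have hn : 1 ≤ nn j := one_le_nn hj
    have hn0 : (0:ℝ) ≤ nn j := by linarith
    have hnorm : ‖(finTwoArrowEquiv ℤ).symm j‖ = nn j := by
      rw [EisensteinSeries.norm_eq_max_natAbs]
      simp only [finTwoArrowEquiv_symm_apply, Matrix.cons_val_zero, Matrix.cons_val_one,
        Matrix.head_cons]
      push_cast [Nat.cast_natAbs]
      rfl
    have hrw : g j = 4 * α ^ 2 * ((1:ℝ)/2) ^ (2*α - 2) *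
        ‖(finTwoArrowEquiv ℤ).symm j‖ ^ (-k) := by
      rw [hnorm]
      have e1 : ((nn j / 2) ^ (α - 1)) ^ 2 = (nn j / 2) ^ (2*α - 2) := by
        rw [← Real.rpow_natCast ((nn j / 2) ^ (α - 1)) 2, ← Real.rpow_mul (by positivity)]
        norm_num; ring_nf
      have e2 : (nn j / 2) ^ (2*α - 2) = nn j ^ (2*α - 2) * ((1:ℝ)/2) ^ (2*α - 2) := by
        rw [show nn j / 2 = nn j * (1/2) by ring, Real.mul_rpow hn0 (by norm_num)]
      have e3 : nn j ^ (-k) = nn j ^ (2*α - 2) := by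
        rw [hkdef]; ring_nf
      rw [hg]
      calc (|α| * (nn j / 2) ^ (α - 1) * 2) ^ 2
          = 4 * α ^ 2 * ((nn j / 2) ^ (α - 1)) ^ 2 := by
            rw [mul_pow, mul_pow, sq_abs]; ring
        _ = 4 * α ^ 2 * ((1:ℝ)/2) ^ (2*α - 2) * nn j ^ (-k) := by
            rw [e1, e2, e3]; ring
    exact le_of_eq hrw
  calc (∑' j : {j : ℤ × ℤ // j ∉ Kfin κ},
        ∫⁻ x in sqC (jv j.1) 1, ENNReal.ofReal ((‖x‖ ^ α - ‖b j.1‖ ^ α) ^ 2))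
      ≤ ∑' j : {j : ℤ × ℤ // j ∉ Kfin κ}, ENNReal.ofReal (g j.1) :=
        ENNReal.tsum_le_tsum key
    _ = ENNReal.ofReal (∑' j : {j : ℤ × ℤ // j ∉ Kfin κ}, g j.1) :=
        (ENNReal.ofReal_tsum_of_nonneg (fun j => sq_nonneg _) hsum).symm
    _ < ⊤ := ENNReal.ofReal_lt_top
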